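/- arXiv:1102.4635 — 2 statements merged into one kernel-verified Lean document; each statement's English description precedes it below -/
import Mathlib

section
/- If y ∈ ℤ[φ] lies in [0, 2−φ) ∪ [4−2φ, 2φ−2) ∪ [φ, 2), then N(R(y)) < N(y)/2 + 8. -/
open Set

noncomputable section

/-- The golden ratio `(1+√5)/2`. -/
def gold : ℝ := (1 + Real.sqrt 5) / 2

/-- The renormalization map `R` on `[0,2)`. -/
def Rmap (y : ℝ) : ℝ :=
  if y < 2 - gold then gold ^ 3 * y
  else if y < 4 - 2 * gold then y + 2 * gold - 2
  else if y < 2 * gold - 2 then gold ^ 3 * y - 2 * gold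
  else if y < gold then y - 2 * gold + 2
  else gold ^ 3 * y - 4 * gold

lemma gold_sq' : gold ^ 2 = gold + 1 := by
  have h5 : Real.sqrt 5 ^ 2 = 5 := Real.sq_sqrt (by norm_num)
  unfold gold
  linear_combination h5 / 4

lemma gold_gt : (1.6 : ℝ) < gold := by
  have h5 : Real.sqrt 5 ^ 2 = 5 := Real.sq_sqrt (by norm_num)
  have : (2.2 : ℝ) < Real.sqrt 5 := by nlinarith [Real.sqrt_nonneg 5]
  unfold gold; linarith

lemma gold_lt : gold < (1.7 : ℝ) := by
  have h5 : Real.sqrt 5 ^ 2 = 5 := Real.sq_sqrt (by norm_num)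
  have : Real.sqrt 5 < (2.3 : ℝ) := by nlinarith [Real.sqrt_nonneg 5]
  unfold gold; linarith

lemma gold_cube : gold ^ 3 = 2 * gold + 1 := by
  linear_combination (gold + 1) * gold_sq'

/-- On the expansion intervals, `R` roughly halves the norm `N(m + nφ) = max |m| |n|`. -/
theorem Rmap_norm_expansion_bound (m n : ℤ)
    (hy : (m : ℝ) + n * gold ∈
      Set.Ico (0 : ℝ) (2 - gold) ∪ Set.Ico (4 - 2 * gold) (2 * gold - 2) ∪
        Set.Ico gold 2) :
    ∃ m' n' : ℤ, Rmap ((m : ℝ) + n * gold) = m' + n' * gold ∧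
      ((max |m'| |n'| : ℤ) : ℝ) < ((max |m| |n| : ℤ) : ℝ) / 2 + 8 := by
  have h16 := gold_gt
  have h17 := gold_lt
  have hg2 := gold_sq'
  have hcube := gold_cube
  set M : ℝ := ((max |m| |n| : ℤ) : ℝ) with hM
  have hn : |(n : ℝ)| ≤ M := by
    rw [hM]
    exact_mod_cast (le_max_right |m| |n|)
  have hM0 : (0 : ℝ) ≤ M := le_trans (abs_nonneg _) hn
  obtain ⟨hnle, hnge⟩ : (n : ℝ) ≤ M ∧ -M ≤ (n : ℝ) := by
    rw [abs_le] at hn; exact ⟨hn.2, hn.1⟩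
  have hb1 : (n : ℝ) * (2 - gold) ≤ M / 2 := by
    nlinarith [mul_nonneg (by linarith : (0:ℝ) ≤ M - n) (by linarith : (0:ℝ) ≤ 2 - gold),
      mul_nonneg hM0 (by linarith : (0:ℝ) ≤ gold - 3/2)]
  have hb2 : -(M / 2) ≤ (n : ℝ) * (2 - gold) := by
    nlinarith [mul_nonneg (by linarith : (0:ℝ) ≤ M + n) (by linarith : (0:ℝ) ≤ 2 - gold),
      mul_nonneg hM0 (by linarith : (0:ℝ) ≤ gold - 3/2)]
  have hb3 : (n : ℝ) * (3 - 2 * gold) ≤ M / 2 := by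
    nlinarith [mul_nonneg (by linarith : (0:ℝ) ≤ M + n) (by linarith : (0:ℝ) ≤ 2 * gold - 3),
      mul_nonneg hM0 (by linarith : (0:ℝ) ≤ 7/2 - 2 * gold)]
  have hb4 : -(M / 2) ≤ (n : ℝ) * (3 - 2 * gold) := by
    nlinarith [mul_nonneg (by linarith : (0:ℝ) ≤ M - n) (by linarith : (0:ℝ) ≤ 2 * gold - 3),
      mul_nonneg hM0 (by linarith : (0:ℝ) ≤ 7/2 - 2 * gold)]
  have e1 : (m : ℝ) + 2 * n = ((m : ℝ) + n * gold) + n * (2 - gold) := by ring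
  have e2 : 2 * (m : ℝ) + 3 * n = 2 * ((m : ℝ) + n * gold) + n * (3 - 2 * gold) := by ring
  rcases hy with (h | h) | h
  · obtain ⟨h1, h2⟩ := h
    refine ⟨m + 2 * n, 2 * m + 3 * n, ?_, ?_⟩
    · rw [Rmap, if_pos h2]
      push_cast
      linear_combination ((m : ℝ) + (n : ℝ) * gold) * hcube + 2 * (n : ℝ) * hg2
    · push_cast
      apply max_lt <;> rw [abs_lt] <;> constructor <;> linarith
  · obtain ⟨h1, h2⟩ := h
    refine ⟨m + 2 * n, 2 * m + 3 * n - 2, ?_, ?_⟩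
    · rw [Rmap, if_neg (not_lt.2 (by linarith)), if_neg (not_lt.2 (by linarith)),
        if_pos h2]
      push_cast
      linear_combination ((m : ℝ) + (n : ℝ) * gold) * hcube + 2 * (n : ℝ) * hg2
    · push_cast
      apply max_lt <;> rw [abs_lt] <;> constructor <;> linarith
  · obtain ⟨h1, h2⟩ := h
    refine ⟨m + 2 * n, 2 * m + 3 * n - 4, ?_, ?_⟩
    · rw [Rmap, if_neg (not_lt.2 (by linarith)), if_neg (not_lt.2 (by linarith)),
        if_neg (not_lt.2 (by linarith)), if_neg (not_lt.2 (by linarith))]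
      push_cast
      linear_combination ((m : ℝ) + (n : ℝ) * gold) * hcube + 2 * (n : ℝ) * hg2
    · push_cast
      apply max_lt <;> rw [abs_lt] <;> constructor <;> linarith
end
end

section
/- For y₁, y₂ ∈ [0,2) the following are equivalent: (i) there exists k ∈ ℤ with y₂ − φ^{3k}·y₁ ∈ 2ℤ[φ] (i.e. y₁ and y₂ lie in the same orbit of the group of maps x ↦ φ^{3k}x + b, b ∈ 2ℤ[φ], acting on ℝ/2ℤ); (ii) there exist integers n₁, n₂ ≥ 1 such that R^{n₁}(y₁) = R^{n₂}(y₂). -/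
open Set

noncomputable section

/-- The set `2ℤ[φ]`. -/
def twoZgold : Set ℝ := {x | ∃ m n : ℤ, x = 2 * m + 2 * n * gold}

lemma g2 : gold^2 = gold + 1 := by
  have h : Real.sqrt 5 ^ 2 = 5 := Real.sq_sqrt (by norm_num)
  unfold gold; nlinarith [h]
lemma glb : (1.6:ℝ) < gold := by
  have h : Real.sqrt 5 ^ 2 = 5 := Real.sq_sqrt (by norm_num)
  have h0 : 0 ≤ Real.sqrt 5 := Real.sqrt_nonneg 5
  unfold gold; nlinarith
lemma gub : gold < 1.625 := by
  have h : Real.sqrt 5 ^ 2 = 5 := Real.sq_sqrt (by norm_num)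
  have h0 : 0 ≤ Real.sqrt 5 := Real.sqrt_nonneg 5
  unfold gold; nlinarith
lemma g3 : gold^3 = 2*gold + 1 := by nlinarith [g2]

/-- accelerated renormalization map (all slopes `gold^3`) -/
def Rt (y : ℝ) : ℝ :=
  if y < 2 - gold then (2*gold+1) * y
  else if y < 4 - 2*gold then (2*gold+1)*y + 2 - 2*gold
  else if y < 2*gold - 2 then (2*gold+1)*y - 2*gold
  else if y < gold then (2*gold+1)*y - 2*gold - 2
  else (2*gold+1)*y - 4*gold

lemma Rt_mem {y : ℝ} (h : y ∈ Ico (0:ℝ) 2) : Rt y ∈ Ico (0:ℝ) 2 := by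
  obtain ⟨h0, h2⟩ := h
  have hg := g2; have hl := glb; have hu := gub
  unfold Rt
  split_ifs with h1 h3 h4 h5 <;> constructor <;> nlinarith

lemma Rt_eq {y : ℝ} (h : y ∈ Ico (0:ℝ) 2) :
    Rt y = Rmap y ∨ Rt y = Rmap (Rmap y) := by
  obtain ⟨h0, h2⟩ := h
  have hg := g2; have hl := glb; have hu := gub
  rcases lt_or_ge y (2-gold) with c1 | c1
  · left; unfold Rt Rmap; rw [if_pos c1, if_pos c1, g3]
  rcases lt_or_ge y (4-2*gold) with c2 | c2
  · right
    have e1 : Rmap y = y + 2*gold - 2 := by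
      unfold Rmap; rw [if_neg (not_lt.2 c1), if_pos c2]
    have e2 : Rmap (Rmap y) = gold^3 * (y + 2*gold-2) - 4*gold := by
      rw [e1]; unfold Rmap
      rw [if_neg, if_neg, if_neg, if_neg] <;> push_neg <;> nlinarith
    rw [e2]
    unfold Rt
    rw [if_neg (not_lt.2 c1), if_pos c2, g3]; linear_combination (-4:ℝ)*g2
  rcases lt_or_ge y (2*gold-2) with c3 | c3
  · left; unfold Rt Rmap
    rw [if_neg (not_lt.2 c1), if_neg (not_lt.2 c2), if_pos c3,
        if_neg (not_lt.2 c1), if_neg (not_lt.2 c2), if_pos c3, g3]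
  rcases lt_or_ge y gold with c4 | c4
  · right
    have e1 : Rmap y = y - 2*gold + 2 := by
      unfold Rmap
      rw [if_neg (not_lt.2 c1), if_neg (not_lt.2 c2), if_neg (not_lt.2 c3), if_pos c4]
    have e2 : Rmap (Rmap y) = gold^3 * (y - 2*gold + 2) := by
      rw [e1]; unfold Rmap; rw [if_pos]; nlinarith
    rw [e2]
    unfold Rt
    rw [if_neg (not_lt.2 c1), if_neg (not_lt.2 c2), if_neg (not_lt.2 c3), if_pos c4, g3]
    linear_combination (4:ℝ)*g2
  · left; unfold Rt Rmap
    rw [if_neg (not_lt.2 c1), if_neg (not_lt.2 c2), if_neg (not_lt.2 c3),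
        if_neg (not_lt.2 c4), if_neg (not_lt.2 c1), if_neg (not_lt.2 c2),
        if_neg (not_lt.2 c3), if_neg (not_lt.2 c4), g3]

/-- lattice element -/
def Lc (m n : ℤ) : ℝ := 2*m + 2*n*gold
/-- Galois conjugate of a lattice element -/
def sig (m n : ℤ) : ℝ := 2*m + 2*n - 2*n*gold

lemma Rt_affine (y : ℝ) : ∃ a b : ℤ, Rt y = (2*gold+1) * y + Lc a b ∧
    2*gold - 4 ≤ sig a b ∧ sig a b ≤ 2*gold := by
  have hl := glb; have hu := gub
  unfold Rt
  split_ifs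
  · exact ⟨0, 0, by unfold Lc; push_cast; ring, by unfold sig; push_cast; nlinarith,
      by unfold sig; push_cast; nlinarith⟩
  · exact ⟨1, -1, by unfold Lc; push_cast; ring, by unfold sig; push_cast; nlinarith,
      by unfold sig; push_cast; nlinarith⟩
  · exact ⟨0, -1, by unfold Lc; push_cast; ring, by unfold sig; push_cast; nlinarith,
      by unfold sig; push_cast; nlinarith⟩
  · exact ⟨-1, -1, by unfold Lc; push_cast; ring, by unfold sig; push_cast; nlinarith,
      by unfold sig; push_cast; nlinarith⟩
  · exact ⟨0, -2, by unfold Lc; push_cast; ring, by unfold sig; push_cast; nlinarith,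
      by unfold sig; push_cast; nlinarith⟩

/-- collision predicate -/
def collideP (y₁ y₂ : ℝ) : Prop :=
  ∃ n₁ n₂ : ℕ, 1 ≤ n₁ ∧ 1 ≤ n₂ ∧ Rmap^[n₁] y₁ = Rmap^[n₂] y₂

lemma collideP.symm {y₁ y₂ : ℝ} (h : collideP y₁ y₂) : collideP y₂ y₁ := by
  obtain ⟨a, b, ha, hb, h⟩ := h; exact ⟨b, a, hb, ha, h.symm⟩

lemma collide_of_eq {y₁ y₂ : ℝ} (h : y₁ = y₂) : collideP y₁ y₂ :=
  ⟨1, 1, le_refl _, le_refl _, by rw [h]⟩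

lemma Rt_pow {y : ℝ} (h : y ∈ Ico (0:ℝ) 2) : ∃ j : ℕ, 1 ≤ j ∧ Rt y = Rmap^[j] y := by
  rcases Rt_eq h with h' | h'
  · exact ⟨1, le_refl _, by simpa using h'⟩
  · exact ⟨2, by norm_num, by simpa [Function.iterate_succ_apply'] using h'⟩

lemma collide_unstep_left {y w : ℝ} (hy : y ∈ Ico (0:ℝ) 2)
    (h : collideP (Rt y) w) : collideP y w := by
  obtain ⟨a, b, ha, hb, h⟩ := h
  obtain ⟨j, hj, hRt⟩ := Rt_pow hy
  refine ⟨a + j, b, le_trans ha (Nat.le_add_right _ _), hb, ?_⟩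
  rw [Function.iterate_add_apply, ← hRt, h]

lemma collide_unstep_right {y w : ℝ} (hy : y ∈ Ico (0:ℝ) 2)
    (h : collideP w (Rt y)) : collideP w y :=
  (collide_unstep_left hy h.symm).symm

lemma collide_of_Rt_eq {y₁ y₂ : ℝ} (h₁ : y₁ ∈ Ico (0:ℝ) 2) (h₂ : y₂ ∈ Ico (0:ℝ) 2)
    (h : Rt y₁ = Rt y₂) : collideP y₁ y₂ :=
  collide_unstep_right h₂ (collide_unstep_left h₁ (collide_of_eq h))

lemma Rt_iter_mem {y : ℝ} (h : y ∈ Ico (0:ℝ) 2) (t : ℕ) : Rt^[t] y ∈ Ico (0:ℝ) 2 := by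
  induction t with
  | zero => simpa using h
  | succ t ih => rw [Function.iterate_succ_apply']; exact Rt_mem ih

lemma collide_unstep_iter_left {y w : ℝ} (hy : y ∈ Ico (0:ℝ) 2) (t : ℕ)
    (h : collideP (Rt^[t] y) w) : collideP y w := by
  induction t generalizing y with
  | zero => simpa using h
  | succ t ih =>
      rw [Function.iterate_succ_apply] at h
      exact collide_unstep_left hy (ih (Rt_mem hy) h)

lemma collide_unstep_iter_right {y w : ℝ} (hy : y ∈ Ico (0:ℝ) 2) (t : ℕ)
    (h : collideP w (Rt^[t] y)) : collideP w y :=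
  (collide_unstep_iter_left hy t h.symm).symm

lemma Rt1 {y : ℝ} (h1 : y < 2 - gold) : Rt y = (2*gold+1) * y := by
  unfold Rt; rw [if_pos h1]
lemma Rt2 {y : ℝ} (h1 : 2 - gold ≤ y) (h2 : y < 4 - 2*gold) :
    Rt y = (2*gold+1)*y + 2 - 2*gold := by
  unfold Rt; rw [if_neg (not_lt.2 h1), if_pos h2]
lemma Rt3 {y : ℝ} (h1 : 4 - 2*gold ≤ y) (h2 : y < 2*gold - 2) :
    Rt y = (2*gold+1)*y - 2*gold := by
  have := glb; have := gub
  unfold Rt; rw [if_neg, if_neg (not_lt.2 h1), if_pos h2]; push_neg; nlinarith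
lemma Rt4 {y : ℝ} (h1 : 2*gold - 2 ≤ y) (h2 : y < gold) :
    Rt y = (2*gold+1)*y - 2*gold - 2 := by
  have := glb; have := gub
  unfold Rt; rw [if_neg, if_neg, if_neg (not_lt.2 h1), if_pos h2] <;> push_neg <;> nlinarith
lemma Rt5 {y : ℝ} (h1 : gold ≤ y) : Rt y = (2*gold+1)*y - 4*gold := by
  have := glb; have := gub
  unfold Rt; rw [if_neg, if_neg, if_neg, if_neg] <;> push_neg <;> nlinarith

/-- pairs at distance `2*gold - 2` collide -/
lemma G2 {x : ℝ} (h0 : 0 ≤ x) (h2 : x + (2*gold - 2) < 2) :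
    collideP x (x + (2*gold - 2)) := by
  have hl := glb; have hu := gub; have hg := g2
  have hx : x ∈ Ico (0:ℝ) 2 := ⟨h0, by nlinarith⟩
  have hxd : x + (2*gold-2) ∈ Ico (0:ℝ) 2 := ⟨by nlinarith, h2⟩
  apply collide_of_Rt_eq hx hxd
  rcases lt_or_ge x (2 - gold) with c | c
  · rw [Rt1 c, Rt4 (by nlinarith) (by nlinarith)]; linear_combination (-4:ℝ)*hg
  · rw [Rt2 c (by nlinarith), Rt5 (by nlinarith)]; linear_combination (-4:ℝ)*hg

lemma Gp_eq : Rt (gold - 1) = (gold - 1) + (4 - 2*gold) := by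
  have hl := glb; have hu := gub; have hg := g2
  rw [Rt2 (by nlinarith) (by nlinarith)]; linear_combination (2:ℝ)*hg

lemma Gp : collideP (gold - 1) ((gold - 1) + (4 - 2*gold)) := by
  have hl := glb; have hu := gub
  have hp : (gold - 1) ∈ Ico (0:ℝ) 2 := ⟨by nlinarith, by nlinarith⟩
  obtain ⟨j, hj, hRt⟩ := Rt_pow hp
  refine ⟨j + 1, 1, le_trans hj (Nat.le_add_right _ _), le_refl _, ?_⟩
  rw [Function.iterate_succ_apply', ← hRt, Gp_eq]
  simp

lemma Gaux : ∀ N : ℕ, ∀ x : ℝ, 0 ≤ x → x + (4 - 2*gold) < 2 →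
    2 ≤ (2*gold+1)^N * |x - (gold - 1)| → collideP x (x + (4 - 2*gold)) := by
  intro N
  induction N with
  | zero =>
      intro x h0 h2 hN
      exfalso
      have hl := glb; have hu := gub
      rcases abs_cases (x - (gold - 1)) with ⟨he, _⟩ | ⟨he, _⟩ <;> rw [he] at hN <;>
        simp at hN <;> nlinarith
  | succ N ih =>
      intro x h0 h2 hN
      have hl := glb; have hu := gub; have hg := g2
      have hx : x ∈ Ico (0:ℝ) 2 := ⟨h0, by nlinarith⟩
      have hxd : x + (4 - 2*gold) ∈ Ico (0:ℝ) 2 := ⟨by nlinarith, h2⟩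
      rcases lt_or_ge x (2 - gold) with c1 | c1
      · -- branch (1,3): equal images
        apply collide_of_Rt_eq hx hxd
        rw [Rt1 c1, Rt3 (by nlinarith) (by nlinarith)]
        linear_combination (4:ℝ)*hg
      rcases lt_or_ge x (4*gold - 6) with c2 | c2
      · -- branch (2,3): difference becomes 2*gold-2
        have e1 : Rt x = (2*gold+1)*x + 2 - 2*gold := Rt2 c1 (by nlinarith)
        have e2 : Rt (x + (4 - 2*gold)) = Rt x + (2*gold - 2) := by
          rw [Rt3 (by nlinarith) (by nlinarith), e1]
          linear_combination (-4:ℝ)*hg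
        have hc : collideP (Rt x) (Rt x + (2*gold - 2)) := by
          apply G2 (Rt_mem hx).1
          rw [← e2]; exact (Rt_mem hxd).2
        rw [← e2] at hc
        exact collide_unstep_right hxd (collide_unstep_left hx hc)
      rcases lt_or_ge x (4 - 2*gold) with c3 | c3
      · -- bad branch (2,4): recurse
        have e1 : Rt x = (2*gold+1)*x + 2 - 2*gold := Rt2 c1 (by nlinarith)
        have e2 : Rt (x + (4 - 2*gold)) = (2*gold+1)*x - 2 := by
          rw [Rt4 (by nlinarith) (by nlinarith)]
          linear_combination (-4:ℝ)*hg
        set w := (2*gold+1)*x - 2 with hw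
        have hw0 : 0 ≤ w := by rw [hw]; nlinarith
        have hw2 : w + (4 - 2*gold) < 2 := by rw [hw]; nlinarith
        have hwp : |w - (gold - 1)| = (2*gold+1) * |x - (gold - 1)| := by
          have : w - (gold - 1) = (2*gold+1) * (x - (gold - 1)) := by
            rw [hw]; linear_combination (2:ℝ)*hg
          rw [this, abs_mul, abs_of_pos (by nlinarith : (0:ℝ) < 2*gold+1)]
        have hc : collideP w (w + (4 - 2*gold)) := by
          apply ih w hw0 hw2
          rw [hwp, ← mul_assoc, ← pow_succ]
          exact hN
        have e3 : w + (4 - 2*gold) = Rt x := by rw [hw, e1]; ring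
        rw [e3, ← e2] at hc
        exact (collide_unstep_right hx (collide_unstep_left hxd hc)).symm
      rcases lt_or_ge x (3*gold - 4) with c4 | c4
      · -- branch (3,4): difference becomes 2*gold-2
        have e1 : Rt x = (2*gold+1)*x - 2*gold := Rt3 c3 (by nlinarith)
        have e2 : Rt (x + (4 - 2*gold)) = Rt x + (2*gold - 2) := by
          rw [Rt4 (by nlinarith) (by nlinarith), e1]
          linear_combination (-4:ℝ)*hg
        have hc : collideP (Rt x) (Rt x + (2*gold - 2)) := by
          apply G2 (Rt_mem hx).1
          rw [← e2]; exact (Rt_mem hxd).2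
        rw [← e2] at hc
        exact collide_unstep_right hxd (collide_unstep_left hx hc)
      · -- branch (3,5): equal images
        apply collide_of_Rt_eq hx hxd
        rw [Rt3 c3 (by nlinarith), Rt5 (by nlinarith)]
        linear_combination (4:ℝ)*hg

lemma exG : ∀ x : ℝ, 0 ≤ x → x + (4 - 2*gold) < 2 → collideP x (x + (4 - 2*gold)) := by
  intro x h0 h2
  by_cases hp : x = gold - 1
  · rw [hp]; exact Gp
  · have hd : 0 < |x - (gold - 1)| := abs_pos.2 (sub_ne_zero.2 hp)
    obtain ⟨N, hNg⟩ := pow_unbounded_of_one_lt (2 / |x - (gold - 1)|)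
      (by have := glb; nlinarith : (1:ℝ) < 2*gold+1)
    apply Gaux N x h0 h2
    rw [div_lt_iff₀ hd] at hNg
    linarith

lemma lat_mul_u (m n : ℤ) : (2*gold+1) * Lc m n = Lc (m+2*n) (2*m+3*n) := by
  unfold Lc; push_cast; linear_combination (4*(n:ℝ))*g2

lemma sig_mul (m n : ℤ) : sig (m+2*n) (2*m+3*n) = (3-2*gold) * sig m n := by
  unfold sig; push_cast; linear_combination (-4*(n:ℝ))*g2

lemma stepS {z₁ z₂ : ℝ} {m n : ℤ} (h : z₂ - z₁ = Lc m n) :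
    ∃ m' n' : ℤ, Rt z₂ - Rt z₁ = Lc m' n' ∧
      |sig m' n'| ≤ (2*gold-3) * |sig m n| + 4 := by
  have hl := glb; have hu := gub
  obtain ⟨a₁, b₁, e₁, l₁, u₁⟩ := Rt_affine z₁
  obtain ⟨a₂, b₂, e₂, l₂, u₂⟩ := Rt_affine z₂
  refine ⟨m + 2*n + a₂ - a₁, 2*m + 3*n + b₂ - b₁, ?_, ?_⟩
  · have : Rt z₂ - Rt z₁ = (2*gold+1) * (z₂ - z₁) + Lc a₂ b₂ - Lc a₁ b₁ := by
      rw [e₁, e₂]; ring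
    rw [this, h, lat_mul_u]
    unfold Lc; push_cast; ring
  · have hsplit : sig (m + 2*n + a₂ - a₁) (2*m + 3*n + b₂ - b₁)
        = (3-2*gold) * sig m n + (sig a₂ b₂ - sig a₁ b₁) := by
      rw [← sig_mul]; unfold sig; push_cast; ring
    rw [hsplit]
    have h1 : |(3-2*gold) * sig m n| = (2*gold-3) * |sig m n| := by
      rw [abs_mul, abs_of_neg (by nlinarith : (3-2*gold) < 0)]; ring_nf
    calc |(3-2*gold) * sig m n + (sig a₂ b₂ - sig a₁ b₁)|
        ≤ |(3-2*gold) * sig m n| + |sig a₂ b₂ - sig a₁ b₁| := abs_add_le _ _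
      _ ≤ (2*gold-3) * |sig m n| + 4 := by
          rw [h1]
          have : |sig a₂ b₂ - sig a₁ b₁| ≤ 4 := by
            rw [abs_le]; constructor <;> nlinarith
          linarith

lemma iterA : ∀ (t : ℕ) (z₁ z₂ : ℝ) (m n : ℤ), z₂ - z₁ = Lc m n →
    ∃ m' n' : ℤ, Rt^[t] z₂ - Rt^[t] z₁ = Lc m' n' ∧
      |sig m' n'| ≤ (2*gold-3)^t * |sig m n| + (2*gold+2) := by
  intro t
  induction t with
  | zero =>
      intro z₁ z₂ m n h
      refine ⟨m, n, by simpa using h, ?_⟩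
      have := glb; simp; nlinarith [abs_nonneg (sig m n)]
  | succ t ih =>
      intro z₁ z₂ m n h
      obtain ⟨mt, nt, ht, hbt⟩ := ih z₁ z₂ m n h
      obtain ⟨m', n', h', hb'⟩ := stepS ht
      refine ⟨m', n', by
        rw [Function.iterate_succ_apply', Function.iterate_succ_apply']; exact h', ?_⟩
      have hl := glb; have hu := gub; have hg := g2
      have hpos : (0:ℝ) ≤ 2*gold-3 := by nlinarith
      have key : (2*gold-3) * |sig mt nt| ≤
          (2*gold-3) * ((2*gold-3)^t * |sig m n| + (2*gold+2)) :=
        mul_le_mul_of_nonneg_left hbt hpos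
      have hps : (2*gold-3)^(t+1) = (2*gold-3)^t * (2*gold-3) := pow_succ _ _
      nlinarith [hb', key, pow_nonneg hpos t, abs_nonneg (sig m n)]

lemma classify {m n : ℤ} (h1 : |Lc m n| < 2) (h2 : |sig m n| ≤ 2*gold+3) :
    (m = 0 ∧ n = 0) ∨ (m = -1 ∧ n = 1) ∨ (m = -2 ∧ n = 1) ∨
    (m = 1 ∧ n = -1) ∨ (m = 2 ∧ n = -1) := by
  have hl := glb; have hu := gub
  rw [abs_lt] at h1; rw [abs_le] at h2
  unfold Lc at h1; unfold sig at h2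
  obtain ⟨h1a, h1b⟩ := h1; obtain ⟨h2a, h2b⟩ := h2
  have hn1 : n < 2 := by
    by_contra hc; push_neg at hc
    have : (2:ℝ) ≤ (n:ℝ) := by exact_mod_cast hc
    nlinarith
  have hn2 : -2 < n := by
    by_contra hc; push_neg at hc
    have : (n:ℝ) ≤ -2 := by exact_mod_cast hc
    nlinarith
  interval_cases n
  · -- n = -1
    have hma : m < 3 := by
      by_contra hc; push_neg at hc
      have : (3:ℝ) ≤ (m:ℝ) := by exact_mod_cast hc
      push_cast at h1a h1b; nlinarith
    have hmb : 0 < m := by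
      by_contra hc; push_neg at hc
      have : (m:ℝ) ≤ 0 := by exact_mod_cast hc
      push_cast at h1a h1b; nlinarith
    interval_cases m
    · right; right; right; left; exact ⟨rfl, rfl⟩
    · right; right; right; right; exact ⟨rfl, rfl⟩
  · -- n = 0
    have hma : m < 1 := by
      by_contra hc; push_neg at hc
      have : (1:ℝ) ≤ (m:ℝ) := by exact_mod_cast hc
      push_cast at h1a h1b; nlinarith
    have hmb : -1 < m := by
      by_contra hc; push_neg at hc
      have : (m:ℝ) ≤ -1 := by exact_mod_cast hc
      push_cast at h1a h1b; nlinarith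
    interval_cases m
    left; exact ⟨rfl, rfl⟩
  · -- n = 1
    have hma : m < 0 := by
      by_contra hc; push_neg at hc
      have : (0:ℝ) ≤ (m:ℝ) := by exact_mod_cast hc
      push_cast at h1a h1b; nlinarith
    have hmb : -3 < m := by
      by_contra hc; push_neg at hc
      have : (m:ℝ) ≤ -3 := by exact_mod_cast hc
      push_cast at h1a h1b; nlinarith
    interval_cases m
    · right; right; left; exact ⟨rfl, rfl⟩
    · right; left; exact ⟨rfl, rfl⟩

lemma uv : (2*gold+1) * (2*gold-3) = 1 := by linear_combination (4:ℝ)*g2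

lemma lat_mul_v (m n : ℤ) : (2*gold-3) * Lc m n = Lc (-3*m+2*n) (2*m-n) := by
  unfold Lc; push_cast; linear_combination (4*(n:ℝ))*g2

lemma lat_u_pow : ∀ (t : ℕ) (a b : ℤ), ∃ m n : ℤ, (2*gold+1)^t * Lc a b = Lc m n := by
  intro t
  induction t with
  | zero => intro a b; exact ⟨a, b, by simp⟩
  | succ t ih =>
      intro a b
      obtain ⟨m, n, hmn⟩ := ih a b
      exact ⟨m + 2*n, 2*m + 3*n, by rw [pow_succ, mul_comm ((2*gold+1)^t) (2*gold+1),
        mul_assoc, hmn, lat_mul_u]⟩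

lemma lat_v_pow : ∀ (t : ℕ) (a b : ℤ), ∃ m n : ℤ, (2*gold-3)^t * Lc a b = Lc m n := by
  intro t
  induction t with
  | zero => intro a b; exact ⟨a, b, by simp⟩
  | succ t ih =>
      intro a b
      obtain ⟨m, n, hmn⟩ := ih a b
      exact ⟨-3*m + 2*n, 2*m - n, by rw [pow_succ, mul_comm ((2*gold-3)^t) (2*gold-3),
        mul_assoc, hmn, lat_mul_v]⟩

lemma Rt_iter_affine : ∀ (t : ℕ) (y : ℝ), ∃ a b : ℤ,
    Rt^[t] y = (2*gold+1)^t * y + Lc a b := by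
  intro t
  induction t with
  | zero => intro y; exact ⟨0, 0, by unfold Lc; simp⟩
  | succ t ih =>
      intro y
      obtain ⟨a, b, hab⟩ := ih y
      obtain ⟨a', b', h', _, _⟩ := Rt_affine (Rt^[t] y)
      refine ⟨a + 2*b + a', 2*a + 3*b + b', ?_⟩
      rw [Function.iterate_succ_apply', h', hab]
      have := lat_mul_u a b
      unfold Lc at *; push_cast at *
      rw [pow_succ]; nlinarith [this]

lemma Rmap_affine (y : ℝ) : ∃ (e : ℕ) (a b : ℤ),
    Rmap y = (2*gold+1)^e * y + Lc a b := by
  unfold Rmap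
  split_ifs
  · exact ⟨1, 0, 0, by rw [g3]; unfold Lc; push_cast; ring⟩
  · exact ⟨0, -1, 1, by unfold Lc; push_cast; ring⟩
  · exact ⟨1, 0, -1, by rw [g3]; unfold Lc; push_cast; ring⟩
  · exact ⟨0, 1, -1, by unfold Lc; push_cast; ring⟩
  · exact ⟨1, 0, -2, by rw [g3]; unfold Lc; push_cast; ring⟩

lemma Rmap_iter_affine : ∀ (t : ℕ) (y : ℝ), ∃ (e : ℕ) (a b : ℤ),
    Rmap^[t] y = (2*gold+1)^e * y + Lc a b := by
  intro t
  induction t with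
  | zero => intro y; exact ⟨0, 0, 0, by unfold Lc; simp⟩
  | succ t ih =>
      intro y
      obtain ⟨e, a, b, hab⟩ := ih y
      obtain ⟨e', a', b', h'⟩ := Rmap_affine (Rmap^[t] y)
      obtain ⟨m, n, hmn⟩ := lat_u_pow e' a b
      refine ⟨e + e', m + a', n + b', ?_⟩
      rw [Function.iterate_succ_apply', h', hab]
      rw [mul_add, ← mul_assoc, ← pow_add, add_comm e' e, hmn]
      unfold Lc; push_cast; ring

lemma lat_sub (a₁ b₁ a₂ b₂ : ℤ) : Lc a₁ b₁ - Lc a₂ b₂ = Lc (a₁-a₂) (b₁-b₂) := by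
  unfold Lc; push_cast; ring

lemma endgame {z₁ z₂ : ℝ} {m n : ℤ} (hz₁ : z₁ ∈ Ico (0:ℝ) 2) (hz₂ : z₂ ∈ Ico (0:ℝ) 2)
    (h : z₂ - z₁ = Lc m n)
    (hcl : (m = 0 ∧ n = 0) ∨ (m = -1 ∧ n = 1) ∨ (m = -2 ∧ n = 1) ∨
      (m = 1 ∧ n = -1) ∨ (m = 2 ∧ n = -1)) : collideP z₁ z₂ := by
  obtain ⟨h10, h12⟩ := hz₁; obtain ⟨h20, h22⟩ := hz₂
  rcases hcl with ⟨hm, hn⟩ | ⟨hm, hn⟩ | ⟨hm, hn⟩ | ⟨hm, hn⟩ | ⟨hm, hn⟩ <;>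
    subst hm <;> subst hn <;> unfold Lc at h <;> push_cast at h
  · exact collide_of_eq (by linarith)
  · have hz : z₂ = z₁ + (2*gold - 2) := by linarith
    rw [hz]; exact G2 h10 (by rw [← hz]; exact h22)
  · have hz : z₁ = z₂ + (4 - 2*gold) := by linarith
    rw [hz]; exact (exG z₂ h20 (by rw [← hz]; exact h12)).symm
  · have hz : z₁ = z₂ + (2*gold - 2) := by linarith
    rw [hz]; exact (G2 h20 (by rw [← hz]; exact h12)).symm
  · have hz : z₂ = z₁ + (4 - 2*gold) := by linarith
    rw [hz]; exact exG z₁ h10 (by rw [← hz]; exact h22)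

lemma four_pow (t : ℕ) : (t:ℝ) < 4^t := by
  induction t with
  | zero => norm_num
  | succ t ih =>
      have hp : (1:ℝ) ≤ 4^t := one_le_pow₀ (by norm_num : (1:ℝ) ≤ 4)
      push_cast
      rw [pow_succ]
      push_cast at ih
      nlinarith

lemma pow_bound {S : ℝ} (hS : 0 ≤ S) : ∃ t : ℕ, (2*gold-3)^t * S ≤ 1 := by
  have hl := glb; have hu := gub
  obtain ⟨t, ht⟩ := exists_nat_gt S
  refine ⟨t, ?_⟩
  have h4 : (0:ℝ) < 4^t := pow_pos (by norm_num) t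
  have h1 : (2*gold-3)^t ≤ (1/4)^t :=
    pow_le_pow_left₀ (by nlinarith) (by nlinarith) t
  have h2 : (2*gold-3)^t * S ≤ (1/4)^t * S := mul_le_mul_of_nonneg_right h1 hS
  have h3 : ((1:ℝ)/4)^t * S = S / 4^t := by rw [div_pow]; ring
  have h5 : S / 4^t ≤ 1 := by
    rw [div_le_one h4]; exact le_of_lt (ht.trans (four_pow t))
  linarith

lemma gold_zpow3 (k : ℤ) : gold ^ ((3:ℤ)*k) = ((2*gold+1):ℝ) ^ k := by
  rw [zpow_mul]
  congr 1
  rw [show ((3:ℤ)) = ((3:ℕ):ℤ) from rfl, zpow_natCast, g3]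

lemma forward {y₁ y₂ : ℝ} (h₁ : y₁ ∈ Ico (0:ℝ) 2) (h₂ : y₂ ∈ Ico (0:ℝ) 2)
    (k m₀ n₀ : ℤ) (h : y₂ - gold ^ ((3:ℤ)*k) * y₁ = Lc m₀ n₀) : collideP y₁ y₂ := by
  have hl := glb
  have hu0 : (0:ℝ) < 2*gold+1 := by nlinarith
  rw [gold_zpow3] at h
  set t₂ : ℕ := (max 1 (1 - k)).toNat with ht₂
  set t₁ : ℕ := ((max 1 (1 - k)) + k).toNat with ht₁
  have hz₂ : (t₂ : ℤ) = max 1 (1-k) := Int.toNat_of_nonneg (by omega)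
  have hz₁ : (t₁ : ℤ) = (max 1 (1-k)) + k := Int.toNat_of_nonneg (by omega)
  have hz12 : (t₁ : ℤ) = (t₂ : ℤ) + k := by omega
  obtain ⟨a₁, b₁, e₁⟩ := Rt_iter_affine t₁ y₁
  obtain ⟨a₂, b₂, e₂⟩ := Rt_iter_affine t₂ y₂
  have hpow : ((2*gold+1):ℝ)^t₂ * ((2*gold+1):ℝ)^k = ((2*gold+1):ℝ)^t₁ := by
    rw [← zpow_natCast ((2*gold+1):ℝ) t₂, ← zpow_natCast ((2*gold+1):ℝ) t₁,
        ← zpow_add₀ (ne_of_gt hu0), ← hz12]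
  obtain ⟨M, N, hMN⟩ := lat_u_pow t₂ m₀ n₀
  have hdiff : Rt^[t₂] y₂ - Rt^[t₁] y₁ = Lc (M + a₂ - a₁) (N + b₂ - b₁) := by
    have hy₂ : y₂ = ((2*gold+1):ℝ)^k * y₁ + Lc m₀ n₀ := by linarith
    rw [e₁, e₂, hy₂, mul_add, ← mul_assoc, hpow, hMN]
    unfold Lc; push_cast; ring
  obtain ⟨t₃, ht₃⟩ := pow_bound (abs_nonneg (sig (M + a₂ - a₁) (N + b₂ - b₁)))
  obtain ⟨m', n', hd', hb'⟩ := iterA t₃ (Rt^[t₁] y₁) (Rt^[t₂] y₂) _ _ hdiff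
  have hw₁ : Rt^[t₃] (Rt^[t₁] y₁) ∈ Ico (0:ℝ) 2 := Rt_iter_mem (Rt_iter_mem h₁ t₁) t₃
  have hw₂ : Rt^[t₃] (Rt^[t₂] y₂) ∈ Ico (0:ℝ) 2 := Rt_iter_mem (Rt_iter_mem h₂ t₂) t₃
  have habs : |Lc m' n'| < 2 := by
    rw [← hd', abs_lt]
    obtain ⟨p1, p2⟩ := hw₁; obtain ⟨q1, q2⟩ := hw₂
    constructor <;> linarith
  have hsig : |sig m' n'| ≤ 2*gold + 3 := by nlinarith
  have hcol : collideP (Rt^[t₃] (Rt^[t₁] y₁)) (Rt^[t₃] (Rt^[t₂] y₂)) :=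
    endgame hw₁ hw₂ hd' (classify habs hsig)
  have hcol2 : collideP (Rt^[t₁] y₁) (Rt^[t₂] y₂) :=
    collide_unstep_iter_right (Rt_iter_mem h₂ t₂) t₃
      (collide_unstep_iter_left (Rt_iter_mem h₁ t₁) t₃ hcol)
  exact collide_unstep_iter_right h₂ t₂ (collide_unstep_iter_left h₁ t₁ hcol2)

lemma backward {y₁ y₂ : ℝ} {n₁ n₂ : ℕ} (h : Rmap^[n₁] y₁ = Rmap^[n₂] y₂) :
    ∃ k : ℤ, ∃ m n : ℤ, y₂ - gold ^ ((3:ℤ)*k) * y₁ = Lc m n := by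
  have hl := glb
  have hu0 : (0:ℝ) < 2*gold+1 := by nlinarith
  obtain ⟨e₁, a₁, b₁, he₁⟩ := Rmap_iter_affine n₁ y₁
  obtain ⟨e₂, a₂, b₂, he₂⟩ := Rmap_iter_affine n₂ y₂
  have hv : ((2*gold+1):ℝ)⁻¹ = (2*gold-3) := by
    field_simp
    linear_combination (-4:ℝ)*g2
  refine ⟨(e₁:ℤ) - e₂, ?_⟩
  have hmain : ((2*gold+1):ℝ)^e₁ * y₁ + Lc a₁ b₁ = ((2*gold+1):ℝ)^e₂ * y₂ + Lc a₂ b₂ := by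
    rw [← he₁, ← he₂, h]
  have hgp : gold ^ ((3:ℤ)*((e₁:ℤ) - e₂)) = ((2*gold+1):ℝ)^e₁ * (2*gold-3)^e₂ := by
    rw [gold_zpow3, zpow_sub₀ (ne_of_gt hu0), zpow_natCast, zpow_natCast,
      div_eq_mul_inv, ← inv_pow, hv]
  obtain ⟨M, N, hMN⟩ := lat_v_pow e₂ (a₁ - a₂) (b₁ - b₂)
  refine ⟨M, N, ?_⟩
  rw [hgp, ← hMN, ← lat_sub]
  have huv : ((2*gold-3):ℝ)^e₂ * ((2*gold+1):ℝ)^e₂ = 1 := by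
    rw [← mul_pow]
    rw [show (2*gold-3) * (2*gold+1) = (2*gold+1) * (2*gold-3) by ring, uv, one_pow]
  have expand : (2*gold-3)^e₂ * (((2*gold+1):ℝ)^e₁ * y₁ + Lc a₁ b₁)
      = (2*gold-3)^e₂ * (((2*gold+1):ℝ)^e₂ * y₂ + Lc a₂ b₂) := by rw [hmain]
  have hy₂ : ((2*gold-3):ℝ)^e₂ * (((2*gold+1):ℝ)^e₂ * y₂) = y₂ := by
    rw [← mul_assoc, huv, one_mul]
  nlinarith [expand, hy₂]


/-- Descent Lemma II: two points of `[0,2)` lie in the same `G₂⁺`-orbit iff they have a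
common image under iterates of `R`. -/
theorem descent_lemma_II (y₁ y₂ : ℝ) (h₁ : y₁ ∈ Set.Ico (0 : ℝ) 2)
    (h₂ : y₂ ∈ Set.Ico (0 : ℝ) 2) :
    (∃ k : ℤ, y₂ - gold ^ ((3 : ℤ) * k) * y₁ ∈ twoZgold) ↔
    (∃ n₁ n₂ : ℕ, 1 ≤ n₁ ∧ 1 ≤ n₂ ∧ Rmap^[n₁] y₁ = Rmap^[n₂] y₂) := by
  constructor
  · rintro ⟨k, m, n, hmn⟩
    exact forward h₁ h₂ k m n (by rw [hmn]; unfold Lc; ring)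
  · rintro ⟨n₁, n₂, _, _, h⟩
    obtain ⟨k, m, n, hk⟩ := backward h
    exact ⟨k, m, n, by rw [hk]; unfold Lc; ring⟩
end
end
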